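/- Let G be a simple graph on a (possibly infinite) vertex set that is connected and acyclic and in which every vertex has exactly 3 neighbors, let v be a vertex of G and let w be a neighbor of v. Then for every integer k ≥ 1, the collection of k-element sets S of vertices with v ∈ S and w ∉ S whose induced subgraph is connected is finite, and its cardinality equals catalan(k). -/

import Mathlib

open SimpleGraph

namespace SubtreeCatalan

variable {V : Type*} [DecidableEq V] {G : SimpleGraph V}

/-- Vertices reachable from `x` by a walk avoiding `z`. -/
def Avoid (G : SimpleGraph V) (x z : V) : Set V := {u | ∃ p : G.Walk x u, z ∉ p.support}

lemma self_mem_avoid {x z : V} (h : x ≠ z) : x ∈ Avoid G x z :=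
  ⟨Walk.nil, by simp [h.symm]⟩

lemma not_mem_avoid {x z : V} : z ∉ Avoid G x z := by
  rintro ⟨p, hp⟩; exact hp p.end_mem_support

/-- In a tree, the branch at a neighbour `a ≠ w` of `v` sits inside the branch at `v`
away from `w`. -/
lemma avoid_mono (hacyc : G.IsAcyclic) {v w a : V} (hvw : G.Adj v w) (hva : G.Adj v a)
    (haw : a ≠ w) : Avoid G a v ⊆ Avoid G v w := by
  rintro u ⟨p0, hp0⟩
  have hp : p0.bypass.IsPath := p0.bypass_isPath
  have hv : v ∉ p0.bypass.support := fun h => hp0 (p0.support_bypass_subset h)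
  refine ⟨Walk.cons hva p0.bypass, ?_⟩
  simp only [Walk.support_cons, List.mem_cons]
  rintro (rfl | hw)
  · exact hvw.ne rfl
  · have htu : (Walk.cons hva (p0.bypass.takeUntil w hw)).IsPath := by
      rw [Walk.cons_isPath_iff]
      exact ⟨hp.takeUntil hw, fun h => hv (Walk.support_takeUntil_subset _ hw h)⟩
    have hep : (Walk.cons hvw Walk.nil : G.Walk v w).IsPath := by simp [hvw.ne]
    have := hacyc.path_unique ⟨_, htu⟩ ⟨_, hep⟩
    have hlen := congrArg (fun q : G.Path v w => q.1.length) this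
    simp only [Walk.length_cons, Walk.length_nil] at hlen
    have h0 : (p0.bypass.takeUntil w hw).length = 0 := by omega
    exact haw (Walk.eq_of_length_eq_zero h0)

/-- In a tree, branches at two distinct neighbours of `v` are disjoint. -/
lemma avoid_disjoint (hacyc : G.IsAcyclic) {v a b : V} (hva : G.Adj v a) (hvb : G.Adj v b)
    (hab : a ≠ b) : Disjoint (Avoid G a v) (Avoid G b v) := by
  rw [Set.disjoint_left]
  rintro u ⟨p, hp⟩ ⟨q, hq⟩
  have hr : (p.append q.reverse).bypass.IsPath := Walk.bypass_isPath _
  have hvr : v ∉ (p.append q.reverse).bypass.support := by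
    intro h
    have := Walk.support_bypass_subset _ h
    rw [Walk.mem_support_append_iff] at this
    rcases this with h' | h'
    · exact hp h'
    · rw [Walk.support_reverse] at h'; exact hq (List.mem_reverse.mp h')
  have hs : (Walk.cons hva.symm (Walk.cons hvb Walk.nil) : G.Walk a b).IsPath := by
    simp [Walk.cons_isPath_iff, hva.ne', hvb.ne, hab]
  have := hacyc.path_unique ⟨_, hr⟩ ⟨_, hs⟩
  apply hvr
  have hmem := congrArg (fun q : G.Path a b => v ∈ q.1.support) this
  simp only [Walk.support_cons, Walk.support_nil, List.mem_cons] at hmem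
  rw [hmem]
  simp

lemma exists_others (hdeg : ∀ v : V, (G.neighborSet v).ncard = 3) {v w : V} (h : G.Adj v w) :
    ∃ p : V × V, G.Adj v p.1 ∧ G.Adj v p.2 ∧ p.1 ≠ p.2 ∧
      G.neighborSet v \ {w} = {p.1, p.2} := by
  have hfin : (G.neighborSet v).Finite :=
    Set.finite_of_ncard_ne_zero (by rw [hdeg v]; norm_num)
  have h2 : (G.neighborSet v \ {w}).ncard = 2 := by
    rw [Set.ncard_diff_singleton_of_mem ((G.mem_neighborSet v w).mpr h), hdeg v]
  obtain ⟨a, b, hab, hs⟩ := Set.ncard_eq_two.mp h2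
  have ha : a ∈ G.neighborSet v \ {w} := hs ▸ (by simp)
  have hb : b ∈ G.neighborSet v \ {w} := hs ▸ (by simp)
  exact ⟨(a, b), ha.1, hb.1, hab, hs⟩

/-- The set of vertices of the subtree encoded by a binary tree, grown at `v` away
from `w`, where `nb v w` names the two neighbours of `v` other than `w`. -/
def F (nb : V → V → V × V) : V → V → Tree Unit → Finset V
  | _, _, BinaryTree.nil => ∅
  | v, w, BinaryTree.node _ l r => insert v (F nb (nb v w).1 v l ∪ F nb (nb v w).2 v r)

section

variable {nb : V → V → V × V}

/-- Specification of `nb`. -/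
def NbSpec (G : SimpleGraph V) (nb : V → V → V × V) : Prop :=
  ∀ ⦃x y : V⦄, G.Adj x y → G.Adj x (nb x y).1 ∧ G.Adj x (nb x y).2 ∧
    (nb x y).1 ≠ (nb x y).2 ∧ G.neighborSet x \ {y} = {(nb x y).1, (nb x y).2}

lemma NbSpec.fst_ne (hnb : NbSpec G nb) {x y : V} (h : G.Adj x y) : (nb x y).1 ≠ y := by
  have := (hnb h).2.2.2
  have h1 : (nb x y).1 ∈ G.neighborSet x \ {y} := this ▸ (by simp)
  simpa using h1.2

lemma NbSpec.snd_ne (hnb : NbSpec G nb) {x y : V} (h : G.Adj x y) : (nb x y).2 ≠ y := by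
  have := (hnb h).2.2.2
  have h1 : (nb x y).2 ∈ G.neighborSet x \ {y} := this ▸ (by simp)
  simpa using h1.2

lemma F_subset_avoid (hacyc : G.IsAcyclic) (hnb : NbSpec G nb) (t : Tree Unit) :
    ∀ {v w : V}, G.Adj v w → ∀ u ∈ F nb v w t, u ∈ Avoid G v w := by
  induction t with
  | nil => intro v w _ u hu; simp [F] at hu
  | node x l r ihl ihr =>
    intro v w hvw u hu
    obtain ⟨ha1, ha2, hne, _⟩ := hnb hvw
    simp only [F, Finset.mem_insert, Finset.mem_union] at hu
    rcases hu with rfl | hu | hu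
    · exact self_mem_avoid hvw.ne
    · exact avoid_mono hacyc hvw ha1 (hnb.fst_ne hvw) (ihl ha1.symm u hu)
    · exact avoid_mono hacyc hvw ha2 (hnb.snd_ne hvw) (ihr ha2.symm u hu)

lemma F_not_mem (hacyc : G.IsAcyclic) (hnb : NbSpec G nb) {t : Tree Unit} {v w : V}
    (hvw : G.Adj v w) : w ∉ F nb v w t :=
  fun h => not_mem_avoid (F_subset_avoid hacyc hnb t hvw w h)

lemma F_card (hacyc : G.IsAcyclic) (hnb : NbSpec G nb) (t : Tree Unit) :
    ∀ {v w : V}, G.Adj v w → (F nb v w t).card = t.numNodes := by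
  induction t with
  | nil => intro v w _; simp [F]
  | node x l r ihl ihr =>
    intro v w hvw
    obtain ⟨ha1, ha2, hne, _⟩ := hnb hvw
    have hdisj : Disjoint (F nb (nb v w).1 v l) (F nb (nb v w).2 v r) := by
      rw [Finset.disjoint_left]
      intro u hu1 hu2
      exact (avoid_disjoint hacyc ha1 ha2 hne).le_bot
        ⟨F_subset_avoid hacyc hnb l ha1.symm u hu1,
         F_subset_avoid hacyc hnb r ha2.symm u hu2⟩
    have hv1 : v ∉ F nb (nb v w).1 v l :=
      fun h => not_mem_avoid (F_subset_avoid hacyc hnb l ha1.symm v h)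
    have hv2 : v ∉ F nb (nb v w).2 v r :=
      fun h => not_mem_avoid (F_subset_avoid hacyc hnb r ha2.symm v h)
    rw [F, Finset.card_insert_of_notMem (by simp [hv1, hv2]),
      Finset.card_union_of_disjoint hdisj, ihl ha1.symm, ihr ha2.symm]
    simp [Tree.numNodes]

lemma F_walks (hnb : NbSpec G nb) (t : Tree Unit) :
    ∀ {v w : V}, G.Adj v w → ∀ u ∈ F nb v w t,
      ∃ p : G.Walk v u, ∀ y ∈ p.support, y ∈ F nb v w t := by
  induction t with
  | nil => intro v w _ u hu; simp [F] at hu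
  | node x l r ihl ihr =>
    intro v w hvw u hu
    obtain ⟨ha1, ha2, hne, _⟩ := hnb hvw
    simp only [F, Finset.mem_insert, Finset.mem_union] at hu
    rcases hu with rfl | hu | hu
    · exact ⟨Walk.nil, by simp [F]⟩
    · obtain ⟨p, hp⟩ := ihl ha1.symm u hu
      refine ⟨Walk.cons ha1 p, ?_⟩
      intro y hy
      simp only [Walk.support_cons, List.mem_cons] at hy
      rcases hy with rfl | hy
      · simp [F]
      · simp only [F, Finset.mem_insert, Finset.mem_union]
        exact Or.inr (Or.inl (hp y hy))
    · obtain ⟨p, hp⟩ := ihr ha2.symm u hu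
      refine ⟨Walk.cons ha2 p, ?_⟩
      intro y hy
      simp only [Walk.support_cons, List.mem_cons] at hy
      rcases hy with rfl | hy
      · simp [F]
      · simp only [F, Finset.mem_insert, Finset.mem_union]
        exact Or.inr (Or.inr (hp y hy))

lemma induce_connected_of_walks {s : Set V} {x : V} (hx : x ∈ s)
    (h : ∀ u ∈ s, ∃ p : G.Walk x u, ∀ y ∈ p.support, y ∈ s) :
    (G.induce s).Connected := by
  rw [connected_induce_iff, Subgraph.connected_iff_forall_exists_walk_subgraph]
  refine ⟨⟨x, hx⟩, ?_⟩
  intro u u' hu hu'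
  obtain ⟨p, hp⟩ := h u hu
  obtain ⟨q, hq⟩ := h u' hu'
  refine ⟨p.reverse.append q, le_trans (Walk.toSubgraph_le_induce_support _)
    (Subgraph.induce_mono_right ?_)⟩
  intro y hy
  simp only [Set.mem_setOf_eq, Walk.mem_support_append_iff, Walk.support_reverse,
    List.mem_reverse] at hy
  rcases hy with hy | hy
  · exact hp y hy
  · exact hq y hy

lemma walks_of_induce_connected {s : Set V} (h : (G.induce s).Connected) {x u : V}
    (hx : x ∈ s) (hu : u ∈ s) : ∃ p : G.Walk x u, ∀ y ∈ p.support, y ∈ s := by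
  rw [connected_induce_iff, Subgraph.connected_iff_forall_exists_walk_subgraph] at h
  obtain ⟨p, hp⟩ := h.2 (by simpa using hx) (by simpa using hu)
  refine ⟨p, fun y hy => ?_⟩
  have := Subgraph.verts_mono hp (by simpa [Walk.verts_toSubgraph] using hy)
  simpa using this

lemma F_connected (hnb : NbSpec G nb) {t : Tree Unit} {v w : V} (hvw : G.Adj v w)
    (ht : t ≠ Tree.nil) : (G.induce ((F nb v w t : Finset V) : Set V)).Connected := by
  obtain ⟨x, l, r, rfl⟩ : ∃ x l r, t = Tree.node x l r := by
    cases t with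
    | nil => exact absurd rfl ht
    | node x l r => exact ⟨x, l, r, rfl⟩
  refine induce_connected_of_walks (x := v) (by simp [F]) ?_
  intro u hu
  obtain ⟨p, hp⟩ := F_walks hnb _ hvw u hu
  exact ⟨p, fun y hy => hp y hy⟩

lemma F_inj (hacyc : G.IsAcyclic) (hnb : NbSpec G nb) (t : Tree Unit) :
    ∀ (t' : Tree Unit) {v w : V}, G.Adj v w → F nb v w t = F nb v w t' → t = t' := by
  induction t with
  | nil =>
    intro t' v w hvw h
    cases t' with
    | nil => rfl
    | node x l r =>
      exfalso
      have : v ∈ (∅ : Finset V) := by rw [show (∅ : Finset V) = F nb v w Tree.nil from rfl, h]; simp [F]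
      simp at this
  | node x l r ihl ihr =>
    intro t' v w hvw h
    cases t' with
    | nil =>
      exfalso
      have : v ∈ (∅ : Finset V) := by rw [show (∅ : Finset V) = F nb v w Tree.nil from rfl, ← h]; simp [F]
      simp at this
    | node x' l' r' =>
      obtain ⟨ha1, ha2, hne, _⟩ := hnb hvw
      have hs1 := F_subset_avoid hacyc hnb l ha1.symm
      have hs2 := F_subset_avoid hacyc hnb r ha2.symm
      have hs1' := F_subset_avoid hacyc hnb l' ha1.symm
      have hs2' := F_subset_avoid hacyc hnb r' ha2.symm
      have hdisj := avoid_disjoint hacyc ha1 ha2 hne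
      simp only [F] at h
      have hvn : ∀ (s : Tree Unit) (hs : ∀ u ∈ F nb (nb v w).1 v s, u ∈ Avoid G (nb v w).1 v),
          v ∉ F nb (nb v w).1 v s := fun s hs hmem => not_mem_avoid (hs v hmem)
      have hv1 : v ∉ F nb (nb v w).1 v l := fun hmem => not_mem_avoid (hs1 v hmem)
      have hv2 : v ∉ F nb (nb v w).2 v r := fun hmem => not_mem_avoid (hs2 v hmem)
      have hv1' : v ∉ F nb (nb v w).1 v l' := fun hmem => not_mem_avoid (hs1' v hmem)
      have hv2' : v ∉ F nb (nb v w).2 v r' := fun hmem => not_mem_avoid (hs2' v hmem)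
      have hU : F nb (nb v w).1 v l ∪ F nb (nb v w).2 v r
          = F nb (nb v w).1 v l' ∪ F nb (nb v w).2 v r' := by
        have := congrArg (fun s : Finset V => s.erase v) h
        simpa [Finset.erase_insert, hv1, hv2, hv1', hv2'] using this
      have hL : F nb (nb v w).1 v l = F nb (nb v w).1 v l' := by
        ext u
        constructor
        · intro hu
          have : u ∈ F nb (nb v w).1 v l' ∪ F nb (nb v w).2 v r' := hU ▸ (by simp [hu])
          rcases Finset.mem_union.mp this with h' | h'
          · exact h'
          · exact absurd ⟨hs1 u hu, hs2' u h'⟩ (fun hc => hdisj.le_bot hc)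
        · intro hu
          have : u ∈ F nb (nb v w).1 v l ∪ F nb (nb v w).2 v r := hU ▸ (by simp [hu])
          rcases Finset.mem_union.mp this with h' | h'
          · exact h'
          · exact absurd ⟨hs1' u hu, hs2 u h'⟩ (fun hc => hdisj.le_bot hc)
      have hR : F nb (nb v w).2 v r = F nb (nb v w).2 v r' := by
        ext u
        constructor
        · intro hu
          have : u ∈ F nb (nb v w).1 v l' ∪ F nb (nb v w).2 v r' := hU ▸ (by simp [hu])
          rcases Finset.mem_union.mp this with h' | h'
          · exact absurd ⟨hs1' u h', hs2 u hu⟩ (fun hc => hdisj.le_bot hc)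
          · exact h'
        · intro hu
          have : u ∈ F nb (nb v w).1 v l ∪ F nb (nb v w).2 v r := hU ▸ (by simp [hu])
          rcases Finset.mem_union.mp this with h' | h'
          · exact absurd ⟨hs1 u h', hs2' u hu⟩ (fun hc => hdisj.le_bot hc)
          · exact h'
      cases x; cases x'
      rw [ihl l' ha1.symm hL, ihr r' ha2.symm hR]

lemma F_surj (hacyc : G.IsAcyclic) (hnb : NbSpec G nb) :
    ∀ (n : ℕ) (S : Finset V), S.card = n → ∀ {v w : V}, G.Adj v w → v ∈ S → w ∉ S →
      (G.induce (S : Set V)).Connected → ∃ t : Tree Unit, F nb v w t = S := by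
  intro n
  induction n using Nat.strong_induction_on with
  | _ n ih =>
  intro S hcard v w hvw hvS hwS hconnS
  classical
  obtain ⟨ha1, ha2, hne, hset⟩ := hnb hvw
  set a := (nb v w).1 with hadef
  set b := (nb v w).2 with hbdef
  -- key decomposition fact
  have key : ∀ u ∈ S, u ≠ v → ∃ x, (x = a ∨ x = b) ∧
      ∃ q : G.Walk x u, v ∉ q.support ∧ ∀ y ∈ q.support, y ∈ S := by
    intro u huS huv
    obtain ⟨p, hp⟩ := walks_of_induce_connected hconnS (Finset.mem_coe.mpr hvS)
      (Finset.mem_coe.mpr huS)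
    have hbp : p.bypass.IsPath := p.bypass_isPath
    have hbpS : ∀ y ∈ p.bypass.support, y ∈ S :=
      fun y hy => hp y (p.support_bypass_subset hy)
    have hnn : ¬ p.bypass.Nil := Walk.not_nil_of_ne (fun h => huv h.symm)
    obtain ⟨x, hadj, q, hq⟩ := Walk.not_nil_iff.mp hnn
    have hqS : ∀ y ∈ q.support, y ∈ S := by
      intro y hy
      exact hbpS y (by rw [hq]; simp [Walk.support_cons, hy])
    have hvq : v ∉ q.support := by
      have := hbp
      rw [hq, Walk.cons_isPath_iff] at this
      exact this.2
    have hxS : x ∈ S := hqS x q.start_mem_support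
    have hxw : x ≠ w := fun h => hwS (h ▸ hxS)
    have hxmem : x ∈ G.neighborSet v \ {w} := ⟨hadj, by simp [hxw]⟩
    rw [hset] at hxmem
    rcases hxmem with h' | h'
    · exact ⟨x, Or.inl h', q, hvq, hqS⟩
    · exact ⟨x, Or.inr h', q, hvq, hqS⟩
  -- a side / b side treatment
  have side : ∀ c d : V, c = a ∨ c = b → d = a ∨ d = b → c ≠ d → G.Adj v c →
      ∀ u ∈ S, u ∈ Avoid G c v → u ≠ v →
        ∃ q : G.Walk c u, (∀ y ∈ q.support, y ∈ S) ∧ ∀ y ∈ q.support, y ∈ Avoid G c v := by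
    intro c d hc hd hcd hvc u huS huAv huv
    obtain ⟨x, hx, q, hvq, hqS⟩ := key u huS huv
    have hxc : x = c := by
      rcases hx with rfl | rfl <;> rcases hc with rfl | rfl <;> first | rfl | skip
      all_goals {
        exfalso
        exact (avoid_disjoint hacyc ha1 ha2 hne).le_bot
          (by constructor <;> first
            | exact huAv
            | exact ⟨q, hvq⟩) }
    subst hxc
    refine ⟨q, hqS, ?_⟩
    intro y hy
    exact ⟨q.takeUntil y hy, fun h => hvq (Walk.support_takeUntil_subset _ hy h)⟩
  -- the two pieces
  set Sa := S.filter (fun u => u ∈ Avoid G a v) with hSadef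
  set Sb := S.filter (fun u => u ∈ Avoid G b v) with hSbdef
  have hvSa : v ∉ Sa := by simp [hSadef, Finset.mem_filter, not_mem_avoid]
  have hvSb : v ∉ Sb := by simp [hSbdef, Finset.mem_filter, not_mem_avoid]
  have hdecomp : S = insert v (Sa ∪ Sb) := by
    ext u
    simp only [Finset.mem_insert, Finset.mem_union, hSadef, hSbdef, Finset.mem_filter]
    constructor
    · intro hu
      by_cases huv : u = v
      · exact Or.inl huv
      · obtain ⟨x, hx, q, hvq, hqS⟩ := key u hu huv
        rcases hx with rfl | rfl
        · exact Or.inr (Or.inl ⟨hu, q, hvq⟩)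
        · exact Or.inr (Or.inr ⟨hu, q, hvq⟩)
    · rintro (rfl | h | h)
      · exact hvS
      · exact h.1
      · exact h.1
  have hcardlt : ∀ T : Finset V, T ⊆ S → v ∉ T → T.card < n := by
    intro T hTS hvT
    calc T.card ≤ (S.erase v).card := Finset.card_le_card (fun u hu =>
          Finset.mem_erase.mpr ⟨fun h => hvT (h ▸ hu), hTS hu⟩)
      _ < S.card := Finset.card_erase_lt_of_mem hvS
      _ = n := hcard
  -- build tree on one side
  have buildSide : ∀ c d : V, c = a ∨ c = b → d = a ∨ d = b → c ≠ d → G.Adj v c →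
      ∃ t : Tree Unit, F nb c v t = S.filter (fun u => u ∈ Avoid G c v) := by
    intro c d hc hd hcd hvc
    set Sc := S.filter (fun u => u ∈ Avoid G c v) with hScdef
    rcases Finset.eq_empty_or_nonempty Sc with hempty | ⟨u0, hu0⟩
    · exact ⟨Tree.nil, by simp [F, hempty]⟩
    · have hScS : Sc ⊆ S := Finset.filter_subset _ _
      have hvSc : v ∉ Sc := by simp [hScdef, Finset.mem_filter, not_mem_avoid]
      have hwalks : ∀ u ∈ Sc, ∃ q : G.Walk c u, ∀ y ∈ q.support, y ∈ Sc := by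
        intro u hu
        rw [hScdef, Finset.mem_filter] at hu
        have huv : u ≠ v := fun h => not_mem_avoid (h ▸ hu.2)
        obtain ⟨q, hqS, hqAv⟩ := side c d hc hd hcd hvc u hu.1 hu.2 huv
        exact ⟨q, fun y hy => by
          rw [hScdef, Finset.mem_filter]; exact ⟨hqS y hy, hqAv y hy⟩⟩
      have hcSc : c ∈ Sc := by
        obtain ⟨q, hq⟩ := hwalks u0 hu0
        exact hq c q.start_mem_support
      have hconnSc : (G.induce (Sc : Set V)).Connected := by
        refine induce_connected_of_walks (x := c) (Finset.mem_coe.mpr hcSc) ?_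
        intro u hu
        obtain ⟨q, hq⟩ := hwalks u (Finset.mem_coe.mp hu)
        exact ⟨q, fun y hy => Finset.mem_coe.mpr (hq y hy)⟩
      exact ih Sc.card (hcardlt Sc hScS hvSc) Sc rfl hvc.symm hcSc hvSc hconnSc
  obtain ⟨l, hl⟩ := buildSide a b (Or.inl rfl) (Or.inr rfl) hne ha1
  obtain ⟨r, hr⟩ := buildSide b a (Or.inr rfl) (Or.inl rfl) hne.symm ha2
  refine ⟨Tree.node () l r, ?_⟩
  rw [show F nb v w (Tree.node () l r) = insert v (F nb a v l ∪ F nb b v r) from rfl,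
    hl, hr, ← hSadef, ← hSbdef, ← hdecomp]

end

end SubtreeCatalan

/-- In a connected acyclic graph in which every vertex has exactly 3 neighbours,
for a vertex `v`, a neighbour `w` of `v` and every `k ≥ 1`, the collection of
`k`-element vertex sets containing `v` but not `w` whose induced subgraph is
connected is finite, and has cardinality `catalan k`. -/
theorem card_subtrees_through_vertex_avoiding_neighbor {V : Type*} (G : SimpleGraph V)
    (hconn : G.Connected) (hacyc : G.IsAcyclic)
    (hdeg : ∀ v : V, (G.neighborSet v).ncard = 3)
    (v w : V) (hvw : G.Adj v w) (k : ℕ) (hk : 1 ≤ k) :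
    {S : Finset V | v ∈ S ∧ w ∉ S ∧ S.card = k ∧ (G.induce (S : Set V)).Connected}.Finite ∧
    {S : Finset V | v ∈ S ∧ w ∉ S ∧ S.card = k ∧ (G.induce (S : Set V)).Connected}.ncard
      = catalan k := by
  classical
  open SubtreeCatalan in
  -- choose, for each oriented edge (x, y), the two other neighbours of x
  have hnb_ex : ∀ x y : V, ∃ p : V × V, G.Adj x y →
      G.Adj x p.1 ∧ G.Adj x p.2 ∧ p.1 ≠ p.2 ∧ G.neighborSet x \ {y} = {p.1, p.2} := by
    intro x y
    by_cases h : G.Adj x y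
    · obtain ⟨p, h1, h2, h3, h4⟩ := exists_others hdeg h
      exact ⟨p, fun _ => ⟨h1, h2, h3, h4⟩⟩
    · exact ⟨(x, x), fun h' => absurd h' h⟩
  choose nb hnb using hnb_ex
  have hnbs : NbSpec G nb := fun x y h => hnb x y h
  have hEq : {S : Finset V | v ∈ S ∧ w ∉ S ∧ S.card = k ∧ (G.induce (S : Set V)).Connected}
      = (fun t => F nb v w t) '' ((Tree.treesOfNumNodesEq k : Finset (Tree Unit)) : Set (Tree Unit)) := by
    ext S
    simp only [Set.mem_setOf_eq, Set.mem_image, Finset.mem_coe, BinaryTree.mem_treesOfNumNodesEq]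
    constructor
    · rintro ⟨hvS, hwS, hcard, hconnS⟩
      obtain ⟨t, ht⟩ := F_surj hacyc hnbs S.card S rfl hvw hvS hwS hconnS
      refine ⟨t, ?_, ht⟩
      exact (F_card hacyc hnbs t hvw).symm.trans (by rw [ht, hcard])
    · rintro ⟨t, htk, rfl⟩
      have htnil : t ≠ Tree.nil := by
        intro h; rw [h] at htk; simp [Tree.numNodes] at htk; omega
      have hvF : v ∈ F nb v w t := by
        obtain ⟨x, l, r, rfl⟩ : ∃ x l r, t = Tree.node x l r := by
          cases t with
          | nil => exact absurd rfl htnil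
          | node x l r => exact ⟨x, l, r, rfl⟩
        simp [F]
      refine ⟨hvF, F_not_mem hacyc hnbs hvw, ?_, F_connected hnbs hvw htnil⟩
      exact (F_card hacyc hnbs t hvw).trans htk
  constructor
  · rw [hEq]
    exact ((Tree.treesOfNumNodesEq k).finite_toSet).image _
  · rw [hEq, Set.ncard_image_of_injOn (fun t ht t' ht' h => F_inj hacyc hnbs t t' hvw h),
      Set.ncard_coe_finset, BinaryTree.treesOfNumNodesEq_card_eq_catalan]
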